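/- With M as above, the eigenvalue of M on the Fourier mode j = 1 equals (q/(2π))([(c_2 q/2 - 1)(1 - cos(2π/q))] + i[(c_2 q/2 - 1) sin(2π/q) - c_1 q/2]), and its real part is strictly positive if and only if c_2 q/2 > 1. -/

import Mathlib

open Real

/-- The circulant linearization matrix of the discrete mean-field rotator flow
at the equidistribution (indices mod `q`). -/
noncomputable def Mlin (q : ℕ) [NeZero q] (c₁ c₂ : ℝ) : Matrix (Fin q) (Fin q) ℂ :=
  fun i j =>
    ((((q : ℝ) / (2 * π)) *
      ((if j = i - 1 then 1 else 0) - (if j = i then 1 else 0)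
        + c₁ * Real.sin (2 * π * ((i.val : ℤ) - (j.val : ℤ)) / q)
        + c₂ * (Real.cos (2 * π * ((i.val : ℤ) - (j.val : ℤ)) / q)
              - Real.cos (2 * π * (((i.val : ℤ) - (j.val : ℤ)) - 1) / q))) : ℝ) : ℂ)

/-- The discrete Fourier vector `u_k = (e^{i 2π k l / q})_l`. -/
noncomputable def uvec (q : ℕ) (k : ℕ) : Fin q → ℂ :=
  fun l => Complex.exp (Complex.I * (2 * π * k * (l.val : ℕ) / q))

/-- The eigenvalue of `Mlin` on the first Fourier mode. -/
noncomputable def lam1 (q : ℕ) (c₁ c₂ : ℝ) : ℂ :=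
  (((q : ℝ) / (2 * π)) * ((c₂ * q / 2 - 1) * (1 - Real.cos (2 * π / q))) : ℝ) +
    (((q : ℝ) / (2 * π)) * ((c₂ * q / 2 - 1) * Real.sin (2 * π / q) - c₁ * q / 2) : ℝ) *
      Complex.I


noncomputable def E (q : ℕ) (n : ℤ) : ℂ := Complex.exp (2 * π * Complex.I * n / q)

lemma E_add (q : ℕ) (m n : ℤ) : E q (m + n) = E q m * E q n := by
  rw [E, E, E, ← Complex.exp_add]; congr 1; push_cast; ring

lemma E_zero (q : ℕ) : E q 0 = 1 := by simp [E]

lemma E_qmul (q : ℕ) [NeZero q] (k : ℤ) : E q (q * k) = 1 := by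
  rw [E]
  have hq : (q : ℂ) ≠ 0 := by exact_mod_cast (NeZero.ne q)
  rw [show 2 * ↑π * Complex.I * ((q:ℤ) * k : ℤ) / q = (k:ℤ) * (2 * π * Complex.I) by
    push_cast; field_simp, Complex.exp_int_mul_two_pi_mul_I]

lemma E_period (q : ℕ) [NeZero q] (m n : ℤ) (h : (q:ℤ) ∣ m - n) : E q m = E q n := by
  obtain ⟨k, hk⟩ := h
  have : m = n + q * k := by linarith
  rw [this, E_add, E_qmul, mul_one]

-- geometric sum
lemma E_sum2 (q : ℕ) [NeZero q] (hq : 3 ≤ q) (c : ℤ) :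
    ∑ j : Fin q, E q (2 * j + c) = 0 := by
  have hpow : ∀ n : ℕ, E q (2 * n) = (E q 2) ^ n := by
    intro n
    induction n with
    | zero => simp [E_zero]
    | succ n ih => rw [pow_succ, ← ih, ← E_add]; norm_num; ring_nf
  have h1 : ∀ j : Fin q, E q (2 * j + c) = E q c * (E q 2) ^ (j : ℕ) := by
    intro j
    rw [E_add, mul_comm (E q _), hpow]
  simp only [h1, ← Finset.mul_sum]
  rw [Fin.sum_univ_eq_sum_range (fun n => E q 2 ^ n), geom_sum_eq, mul_eq_zero]
  · right
    rw [div_eq_zero_iff]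
    left
    rw [show E q 2 ^ q = E q (q * 2) by
      rw [E]
      rw [← Complex.exp_nat_mul]
      rw [E]
      congr 1
      push_cast; ring, E_qmul]
    ring
  · -- E q 2 ≠ 1
    intro hE
    rw [E, Complex.exp_eq_one_iff] at hE
    obtain ⟨n, hn⟩ := hE
    have hq0 : (q : ℂ) ≠ 0 := by exact_mod_cast (NeZero.ne q)
    have hI : (Complex.I : ℂ) ≠ 0 := Complex.I_ne_zero
    have hpi : (π : ℂ) ≠ 0 := by exact_mod_cast Real.pi_ne_zero
    have h2 : (2 : ℂ) = n * q := by
      field_simp at hn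
      have h3 : (2:ℂ) * (2 * ↑π * Complex.I) = (↑n * ↑q) * (2 * ↑π * Complex.I) := by
        have hn' : (2:ℂ) = q * n := by exact_mod_cast hn
        linear_combination (2 * ↑π * Complex.I) * hn'
      have hne : (2 * (π:ℂ) * Complex.I) ≠ 0 := by
        simp [hpi, Complex.I_ne_zero]
      exact mul_right_cancel₀ hne h3
    have h2' : (2 : ℤ) = n * q := by exact_mod_cast h2
    have : (q:ℤ) ∣ 2 := ⟨n, by linarith⟩
    have := Int.le_of_dvd (by norm_num) this
    omega

lemma E_fin_add (q : ℕ) [NeZero q] (a b : Fin q) :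
    E q ((a + b : Fin q).val) = E q (a.val) * E q (b.val) := by
  rw [← E_add]
  apply E_period
  rw [Fin.add_def]
  refine ⟨-((a.val + b.val)/q : ℕ), ?_⟩
  have h := Nat.div_add_mod (a.val + b.val) q
  have h' : ((q * ((a.val + b.val)/q) + (a.val + b.val) % q : ℕ) : ℤ) = ((a.val + b.val : ℕ) : ℤ) := by
    exact_mod_cast h
  push_cast at h' ⊢
  linarith


lemma sinE (q : ℕ) (n : ℤ) :
    ((Real.sin (2 * π * (n : ℝ) / q) : ℝ) : ℂ) = (E q (-n) - E q n) * Complex.I / 2 := by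
  have h1 : Complex.exp (-((2 * π * (n : ℝ) / q : ℝ) : ℂ) * Complex.I) = E q (-n) := by
    rw [E]; congr 1; push_cast; ring
  have h2 : Complex.exp (((2 * π * (n : ℝ) / q : ℝ) : ℂ) * Complex.I) = E q n := by
    rw [E]; congr 1; push_cast; ring
  rw [Complex.ofReal_sin, Complex.sin, h1, h2]

lemma cosE (q : ℕ) (n : ℤ) :
    ((Real.cos (2 * π * (n : ℝ) / q) : ℝ) : ℂ) = (E q n + E q (-n)) / 2 := by
  have h1 : Complex.exp (-((2 * π * (n : ℝ) / q : ℝ) : ℂ) * Complex.I) = E q (-n) := by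
    rw [E]; congr 1; push_cast; ring
  have h2 : Complex.exp (((2 * π * (n : ℝ) / q : ℝ) : ℂ) * Complex.I) = E q n := by
    rw [E]; congr 1; push_cast; ring
  rw [Complex.ofReal_cos, Complex.cos, h1, h2]

lemma uvec_eq (q : ℕ) (l : Fin q) : uvec q 1 l = E q l.val := by
  rw [uvec, E]; congr 1; push_cast; ring

lemma row (q : ℕ) [NeZero q] (hq : 3 ≤ q) (c₁ c₂ : ℝ) (i : Fin q) :
    ∑ j : Fin q, Mlin q c₁ c₂ i j * uvec q 1 j =
      (((q:ℂ)/(2*π)) * ((E q (-1) - 1) - (c₁:ℂ) * q * Complex.I/2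
        + (c₂:ℂ) * q * (1 - E q (-1))/2)) * E q i.val := by
  set C : ℂ := (q:ℂ)/(2*π) with hC
  have step1 : ∀ j : Fin q, Mlin q c₁ c₂ i j * uvec q 1 j =
      (C * (if j = i - 1 then E q j.val else 0) - C * (if j = i then E q j.val else 0))
      + ((C * c₁ * Complex.I/2) * E q (2*(j.val:ℤ) + -(i.val:ℤ))
          - (C * c₁ * Complex.I/2) * E q (i.val:ℤ))
      + ((C * c₂/2) * E q (i.val:ℤ) + (C * c₂/2) * E q (2*(j.val:ℤ) + -(i.val:ℤ))
          - (C * c₂/2) * E q ((i.val:ℤ) - 1)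
          - (C * c₂/2) * E q (2*(j.val:ℤ) + (1 - (i.val:ℤ)))) := by
    intro j
    have e1 : E q (2*(j.val:ℤ) + -(i.val:ℤ)) = E q (-((i.val:ℤ) - (j.val:ℤ))) * E q j.val := by
      rw [← E_add]; congr 1; ring
    have e2 : E q (2*(j.val:ℤ) + (1 - (i.val:ℤ)))
        = E q (-((i.val:ℤ) - (j.val:ℤ) - 1)) * E q j.val := by
      rw [← E_add]; congr 1; ring
    have e3 : E q (i.val:ℤ) = E q ((i.val:ℤ) - (j.val:ℤ)) * E q j.val := by
      rw [← E_add]; congr 1; ring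
    have e4 : E q ((i.val:ℤ) - 1) = E q ((i.val:ℤ) - (j.val:ℤ) - 1) * E q j.val := by
      rw [← E_add]; congr 1; ring
    rw [Mlin, uvec_eq]
    simp only [Complex.ofReal_mul, Complex.ofReal_add, Complex.ofReal_sub,
      apply_ite Complex.ofReal, Complex.ofReal_one, Complex.ofReal_zero,
      Complex.ofReal_div, Complex.ofReal_ofNat, Complex.ofReal_natCast]
    rw [show (2 * π * (((i.val:ℤ):ℝ) - ((j.val:ℤ):ℝ)) / q : ℝ)
          = 2 * π * ((((i.val:ℤ) - (j.val:ℤ)):ℤ):ℝ) / q by push_cast; ring]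
    rw [show (2 * π * (((i.val:ℤ):ℝ) - ((j.val:ℤ):ℝ) - 1) / q : ℝ)
          = 2 * π * ((((i.val:ℤ) - (j.val:ℤ) - 1):ℤ):ℝ) / q by push_cast; ring]
    rw [sinE, cosE, cosE, e1, e2, e3, e4]
    split_ifs <;> ring
  rw [Finset.sum_congr rfl (fun j _ => step1 j)]
  simp only [Finset.sum_add_distrib, Finset.sum_sub_distrib, ← Finset.mul_sum,
    Finset.sum_const, Finset.card_univ, Fintype.card_fin, nsmul_eq_mul,
    Finset.sum_ite_eq' Finset.univ, Finset.mem_univ, if_true, E_sum2 q hq, mul_zero]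
  -- now relate E q ((i-1).val) to E q i.val * E q (-1)
  have hone : ((1 : Fin q).val : ℤ) = 1 := by
    rw [Fin.val_one']
    push_cast [Nat.mod_eq_of_lt (by omega : 1 < q)]
    try rfl
  have h5 : E q (i.val:ℤ) = E q ((i - 1 : Fin q).val) * E q 1 := by
    conv_lhs => rw [← sub_add_cancel i 1]
    rw [E_fin_add, hone]
  have h16 : E q 1 * E q (-1) = 1 := by
    rw [← E_add]; norm_num [E_zero]
  have h6 : E q ((i - 1 : Fin q).val) = E q (i.val:ℤ) * E q (-1) := by
    rw [h5, mul_assoc, h16, mul_one]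
  have h7 : E q ((i.val:ℤ) - 1) = E q (i.val:ℤ) * E q (-1) := by
    rw [← E_add]; congr 1; try ring
  rw [h6, h7]
  ring


lemma lam1_eq (q : ℕ) [NeZero q] (c₁ c₂ : ℝ) :
    lam1 q c₁ c₂ = ((q:ℂ)/(2*π)) * ((E q (-1) - 1) - (c₁:ℂ) * q * Complex.I/2
        + (c₂:ℂ) * q * (1 - E q (-1))/2) := by
  have hE : E q (-1) = ((Real.cos (2*π/q) : ℝ) : ℂ) - ((Real.sin (2*π/q) : ℝ) : ℂ) * Complex.I := by
    rw [E, show (2 * ↑π * Complex.I * ((-1 : ℤ) : ℂ) / q) = (-((2*π/q : ℝ) : ℂ)) * Complex.I by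
      push_cast; ring, Complex.exp_mul_I]
    rw [Complex.cos_neg, Complex.sin_neg, ← Complex.ofReal_cos, ← Complex.ofReal_sin]
    ring
  rw [lam1, hE]
  push_cast
  ring

theorem stmt_8 (q : ℕ) [NeZero q] (hq : 3 ≤ q) (c₁ c₂ : ℝ) :
    (Mlin q c₁ c₂).mulVec (uvec q 1) = lam1 q c₁ c₂ • uvec q 1 ∧
    (0 < (lam1 q c₁ c₂).re ↔ 1 < c₂ * q / 2) := by
  constructor
  · funext i
    rw [Matrix.mulVec, dotProduct]
    rw [row q hq c₁ c₂ i, Pi.smul_apply, smul_eq_mul, uvec_eq, lam1_eq]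
  · have hre : (lam1 q c₁ c₂).re
        = ((q:ℝ)/(2*π)) * ((c₂ * q / 2 - 1) * (1 - Real.cos (2*π/q))) := by
      simp only [lam1, Complex.add_re, Complex.mul_re, Complex.ofReal_re,
        Complex.ofReal_im, Complex.I_re, Complex.I_im]
      ring
    have hπ := Real.pi_pos
    have hq' : (0:ℝ) < q := by positivity
    have hK : (0:ℝ) < (q:ℝ)/(2*π) := by positivity
    have hx1 : 0 < 2*π/q := by positivity
    have hx2 : 2*π/q < 2*π := by
      rw [div_lt_iff₀ hq']
      have hq3 : (3:ℝ) ≤ q := by exact_mod_cast hq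
      nlinarith
    have hc : Real.cos (2*π/q) < 1 := by
      rcases lt_or_eq_of_le (Real.cos_le_one (2*π/q)) with h | h
      · exact h
      · exfalso
        have := (Real.cos_eq_one_iff_of_lt_of_lt (by linarith) hx2).mp h
        linarith
    rw [hre]
    constructor
    · intro h
      by_contra hx
      push_neg at hx
      have ht : (c₂ * ↑q / 2 - 1) * (1 - Real.cos (2*π/q)) ≤ 0 :=
        mul_nonpos_of_nonpos_of_nonneg (by linarith) (by linarith [Real.cos_le_one (2*π/(q:ℝ))])
      have := mul_nonpos_of_nonneg_of_nonpos hK.le ht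
      linarith
    · intro h
      have h1 : 0 < c₂ * q / 2 - 1 := by linarith
      have h2 : 0 < 1 - Real.cos (2*π/q) := by linarith
      positivity
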